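/- For every integer n ≥ 4 there exists a constant C such that for all integers q ≥ 2, |𝔏_n(q) − (q^{n²−1} − q^{n²−2})| ≤ C q^{n²−3}. -/

import Mathlib

/-- `v q k r = q^{2(k−r)}((qʳ − 1) q^{r−1} + qʳ)`. -/
def vAux (q : ℤ) (k r : ℕ) : ℤ :=
  q ^ (2 * (k - r)) * ((q ^ r - 1) * q ^ (r - 1) + q ^ r)

/-- `f` is bounded by `C * q^d` for `q ≥ 2`. -/
def Bnd (f : ℤ → ℤ) (d : ℕ) : Prop := ∃ C : ℤ, ∀ q : ℤ, 2 ≤ q → |f q| ≤ C * q ^ d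

theorem Bnd.exists_nonneg {f : ℤ → ℤ} {d : ℕ} (h : Bnd f d) :
    ∃ C : ℤ, 0 ≤ C ∧ ∀ q : ℤ, 2 ≤ q → |f q| ≤ C * q ^ d := by
  obtain ⟨C, hC⟩ := h
  refine ⟨|C|, abs_nonneg _, fun q hq => (hC q hq).trans ?_⟩
  have hq0 : (0:ℤ) ≤ q := by linarith
  exact mul_le_mul_of_nonneg_right (le_abs_self C) (pow_nonneg hq0 d)

theorem Bnd.congr {f g : ℤ → ℤ} {d : ℕ} (h : ∀ q : ℤ, 2 ≤ q → f q = g q)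
    (hg : Bnd g d) : Bnd f d := by
  obtain ⟨C, hC⟩ := hg
  exact ⟨C, fun q hq => (h q hq) ▸ hC q hq⟩

theorem Bnd.mono {f : ℤ → ℤ} {d e : ℕ} (hf : Bnd f d) (h : d ≤ e) : Bnd f e := by
  obtain ⟨C, hC0, hC⟩ := hf.exists_nonneg
  refine ⟨C, fun q hq => (hC q hq).trans ?_⟩
  have h1 : (1:ℤ) ≤ q := by linarith
  exact mul_le_mul_of_nonneg_left (pow_le_pow_right₀ h1 h) hC0

theorem bnd_const (c : ℤ) (d : ℕ) : Bnd (fun _ => c) d := by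
  refine ⟨|c|, fun q hq => ?_⟩
  have h1 : (1:ℤ) ≤ q ^ d := one_le_pow₀ (by linarith)
  nlinarith [abs_nonneg c]

theorem bnd_pow (k d : ℕ) (h : k ≤ d) : Bnd (fun q => q ^ k) d := by
  refine ⟨1, fun q hq => ?_⟩
  have h1 : (1:ℤ) ≤ q := by linarith
  rw [abs_pow, abs_of_nonneg (by linarith : (0:ℤ) ≤ q), one_mul]
  exact pow_le_pow_right₀ h1 h

theorem bnd_id (d : ℕ) (h : 1 ≤ d) : Bnd (fun q => q) d :=
  Bnd.congr (fun q _ => (pow_one q).symm) (bnd_pow 1 d h)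

theorem bnd_qsub3_pow (k d : ℕ) (h : k ≤ d) : Bnd (fun q => (q - 3) ^ k) d := by
  refine ⟨1, fun q hq => ?_⟩
  have h1 : (1:ℤ) ≤ q := by linarith
  have habs : |q - 3| ≤ q := by
    rcases abs_cases (q - 3) with ⟨he, _⟩ | ⟨he, _⟩ <;> linarith
  calc |(q-3)^k| = |q-3|^k := abs_pow _ _
    _ ≤ q ^ k := pow_le_pow_left₀ (abs_nonneg _) habs k
    _ ≤ 1 * q ^ d := by rw [one_mul]; exact pow_le_pow_right₀ h1 h

theorem Bnd.add {f g : ℤ → ℤ} {d : ℕ} (hf : Bnd f d) (hg : Bnd g d) :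
    Bnd (fun q => f q + g q) d := by
  obtain ⟨C, hC⟩ := hf; obtain ⟨D, hD⟩ := hg
  refine ⟨C + D, fun q hq => ?_⟩
  calc |f q + g q| ≤ |f q| + |g q| := abs_add_le _ _
    _ ≤ C * q ^ d + D * q ^ d := add_le_add (hC q hq) (hD q hq)
    _ = (C + D) * q ^ d := by ring

theorem Bnd.neg {f : ℤ → ℤ} {d : ℕ} (hf : Bnd f d) : Bnd (fun q => -(f q)) d := by
  obtain ⟨C, hC⟩ := hf
  exact ⟨C, fun q hq => by rw [abs_neg]; exact hC q hq⟩

theorem Bnd.sub {f g : ℤ → ℤ} {d : ℕ} (hf : Bnd f d) (hg : Bnd g d) :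
    Bnd (fun q => f q - g q) d :=
  Bnd.congr (fun q _ => sub_eq_add_neg _ _) (hf.add hg.neg)

theorem Bnd.mul {f g : ℤ → ℤ} {d e : ℕ} (hf : Bnd f d) (hg : Bnd g e) :
    Bnd (fun q => f q * g q) (d + e) := by
  obtain ⟨C, hC0, hC⟩ := hf.exists_nonneg
  obtain ⟨D, hD0, hD⟩ := hg.exists_nonneg
  refine ⟨C * D, fun q hq => ?_⟩
  have hq0 : (0:ℤ) ≤ q := by linarith
  calc |f q * g q| = |f q| * |g q| := abs_mul _ _
    _ ≤ (C * q ^ d) * (D * q ^ e) :=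
        mul_le_mul (hC q hq) (hD q hq) (abs_nonneg _)
          (mul_nonneg hC0 (pow_nonneg hq0 _))
    _ = C * D * q ^ (d + e) := by rw [pow_add]; ring

theorem bnd_sum {ι : Type*} (s : Finset ι) (F : ι → ℤ → ℤ) (d : ℕ)
    (h : ∀ k ∈ s, Bnd (F k) d) : Bnd (fun q => ∑ k ∈ s, F k q) d := by
  classical
  induction s using Finset.induction_on with
  | empty => exact Bnd.congr (fun q _ => by simp) (bnd_const 0 d)
  | insert a s hx ih =>
    refine Bnd.congr (g := fun q => F a q + ∑ k ∈ s, F k q)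
      (fun q _ => Finset.sum_insert hx) ?_
    exact Bnd.add (h a (Finset.mem_insert_self a s))
      (ih fun k hk => h k (Finset.mem_insert_of_mem hk))

/-- For every `n ≥ 4` there is a constant `C` such that for all integers `q ≥ 2`,
`|𝔏ₙ(q) − (q^{n²−1} − q^{n²−2})| ≤ C q^{n²−3}`. -/
theorem lower_bound_asymptotics
    (L U N0 N1 : ℕ → ℤ → ℤ)
    (hL1 : ∀ q, L 1 q = 0) (hL2 : ∀ q, L 2 q = 0)
    (hU1 : ∀ q, U 1 q = 1) (hU2 : ∀ q, U 2 q = q ^ 3 + q ^ 2 - q)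
    (hL3 : ∀ q, L 3 q =
      q ^ 9 - (q ^ 3 - 1) * (q ^ 3 - q) * (q ^ 3 - q ^ 2) - q ^ 2 * (q - 1) ^ 5)
    (hU3 : ∀ q, U 3 q =
      q ^ 9 - (q ^ 3 - 1) * (q ^ 3 - q) * (q ^ 3 - q ^ 2) - q ^ 2 * (q - 1) ^ 5)
    (hN0two : ∀ q, N0 2 q = 1)
    (hN0 : ∀ n, 4 ≤ n → ∀ q, N0 (n - 1) q =
      1 + ∑ k ∈ Finset.Icc 1 (n - 3),
        ((n - 1).choose (n - k - 2) : ℤ) ^ 2 * q ^ (2 * (n - k - 2) * (k + 1)) *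
          (q ^ ((n - k - 2) ^ 2) - L (n - k - 2) q))
    (hN1 : ∀ n, 4 ≤ n → ∀ q, N1 (n - 1) q =
      (q ^ ((n - 1) ^ 2 - 1) - (q - 3) ^ ((n - 1) ^ 2 - 1)) +
        N0 (n - 2) q * q ^ (2 * (n - 2) + 1) +
        q * U (n - 2) q * vAux q (n - 2) 1)
    (hL : ∀ n, 4 ≤ n → ∀ q, L n q =
      (q ^ ((n - 1) ^ 2) - U (n - 1) q) * q ^ (2 * (n - 1)))
    (hU : ∀ n, 4 ≤ n → ∀ q, U n q =
      (q ^ ((n - 1) ^ 2) - L (n - 1) q) * q ^ (2 * (n - 1)) +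
        q * N0 (n - 1) q * vAux q (n - 1) 0 +
        q * N1 (n - 1) q * vAux q (n - 1) 1 +
        q * U (n - 1) q * vAux q (n - 1) 2)
    (n : ℕ) (hn : 4 ≤ n) :
    ∃ C : ℤ, ∀ q : ℤ, 2 ≤ q →
      |L n q - (q ^ (n ^ 2 - 1) - q ^ (n ^ 2 - 2))| ≤ C * q ^ (n ^ 2 - 3) := by
  have N0bnd : ∀ j : ℕ, 2 ≤ j →
      (∀ i, 1 ≤ i → i < j → Bnd (fun q => L i q) (i ^ 2 - 1)) →
      Bnd (fun q => N0 j q) (j ^ 2 - 2) := by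
    intro j hj hLb
    rcases eq_or_lt_of_le hj with h2 | h3
    · exact Bnd.congr (fun q _ => by rw [← h2, hN0two]) (bnd_const 1 _)
    · have h := hN0 (j + 1) (by omega)
      refine Bnd.congr (g := fun q => 1 + ∑ k ∈ Finset.Icc 1 (j + 1 - 3),
        ((j.choose (j + 1 - k - 2) : ℤ)) ^ 2 * q ^ (2 * (j + 1 - k - 2) * (k + 1)) *
          (q ^ ((j + 1 - k - 2) ^ 2) - L (j + 1 - k - 2) q)) (fun q _ => h q) ?_
      refine Bnd.add (bnd_const 1 _) (bnd_sum _ _ _ ?_)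
      intro k hk
      rw [Finset.mem_Icc] at hk
      obtain ⟨i, hi⟩ : ∃ i, j + 1 - k - 2 = i := ⟨_, rfl⟩
      rw [hi]
      have hj' : j = k + 1 + i := by omega
      have h1i : 1 ≤ i := by omega
      have hlt : i < j := by omega
      have t1 : Bnd (fun q : ℤ => ((j.choose i : ℤ)) ^ 2 * q ^ (2 * i * (k + 1)))
          (0 + 2 * i * (k + 1)) :=
        Bnd.mul (bnd_const _ 0) (bnd_pow _ _ le_rfl)
      have t2 : Bnd (fun q : ℤ => q ^ (i ^ 2) - L i q) (i ^ 2) :=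
        Bnd.sub (bnd_pow _ _ le_rfl) (Bnd.mono (hLb i h1i hlt) (Nat.sub_le _ _))
      refine Bnd.mono (Bnd.mul t1 t2) ?_
      have hsq : (k + 1 + i) ^ 2 = 2 * i * (k + 1) + i ^ 2 + (k + 1) ^ 2 := by ring
      have h4 : 4 ≤ (k + 1) ^ 2 := by
        calc 4 = 2 ^ 2 := by norm_num
          _ ≤ (k + 1) ^ 2 := Nat.pow_le_pow_left (by omega) 2
      rw [hj']
      omega
  -- auxiliary small bounds
  have bndlin : Bnd (fun q : ℤ => (q - 1) * q ^ 0 + q) 1 :=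
    Bnd.congr (g := fun q : ℤ => ((fun q : ℤ => q) q - (fun _ : ℤ => (1:ℤ)) q) + (fun q : ℤ => q) q)
      (fun q _ => by ring)
      (Bnd.add (Bnd.sub (bnd_id 1 le_rfl) (bnd_const 1 1)) (bnd_id 1 le_rfl))
  have bndcub : Bnd (fun q : ℤ => (q ^ 2 - 1) * q ^ 1 + q ^ 2) 3 := by
    refine Bnd.add (d := 3) ?_ (Bnd.mono (bnd_pow 2 2 le_rfl) (by omega))
    exact Bnd.mul (Bnd.sub (bnd_pow 2 2 le_rfl) (bnd_const 1 2)) (bnd_pow 1 1 le_rfl)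
  -- the key induction
  have key : ∀ m : ℕ, 1 ≤ m →
      Bnd (fun q => L m q) (m ^ 2 - 1) ∧ Bnd (fun q => U m q) (m ^ 2 - 1) ∧
      (3 ≤ m → Bnd (fun q => U m q - q ^ (m ^ 2 - 1)) (m ^ 2 - 2)) := by
    intro m
    induction m using Nat.strong_induction_on with
    | _ m ih =>
      intro hm1
      match m, hm1 with
      | 1, _ =>
        exact ⟨Bnd.congr (fun q _ => hL1 q) (bnd_const 0 _),
          Bnd.congr (fun q _ => hU1 q) (bnd_const 1 _), by omega⟩
      | 2, _ =>
        refine ⟨Bnd.congr (fun q _ => hL2 q) (bnd_const 0 _), ?_, by omega⟩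
        refine Bnd.congr (g := fun q => (q ^ 3 + q ^ 2) - q ^ 1) (fun q _ => by rw [hU2]; ring) ?_
        exact Bnd.sub (Bnd.add (bnd_pow 3 3 le_rfl) (bnd_pow 2 3 (by omega)))
          (bnd_pow 1 3 (by omega))
      | 3, _ =>
        have hpoly : ∀ q : ℤ, q ^ 9 - (q ^ 3 - 1) * (q ^ 3 - q) * (q ^ 3 - q ^ 2) -
            q ^ 2 * (q - 1) ^ 5 =
            q ^ 8 + (5 * q ^ 6 - 11 * q ^ 5 + 9 * q ^ 4 - 4 * q ^ 3 + q ^ 2) := by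
          intro q; ring
        have hlow : Bnd (fun q : ℤ => 5 * q ^ 6 - 11 * q ^ 5 + 9 * q ^ 4 - 4 * q ^ 3 + q ^ 2) 6 := by
          refine Bnd.add (Bnd.sub (Bnd.add (Bnd.sub ?_ ?_) ?_) ?_) ?_
          · exact Bnd.mono (Bnd.mul (bnd_const 5 0) (bnd_pow 6 6 le_rfl)) (by omega)
          · exact Bnd.mono (Bnd.mul (bnd_const 11 0) (bnd_pow 5 5 le_rfl)) (by omega)
          · exact Bnd.mono (Bnd.mul (bnd_const 9 0) (bnd_pow 4 4 le_rfl)) (by omega)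
          · exact Bnd.mono (Bnd.mul (bnd_const 4 0) (bnd_pow 3 3 le_rfl)) (by omega)
          · exact bnd_pow 2 6 (by omega)
        refine ⟨?_, ?_, fun _ => ?_⟩
        · refine Bnd.congr (g := fun q : ℤ => q ^ 8 +
            (5 * q ^ 6 - 11 * q ^ 5 + 9 * q ^ 4 - 4 * q ^ 3 + q ^ 2))
            (fun q _ => by rw [hL3]; exact hpoly q) ?_
          exact Bnd.add (bnd_pow 8 8 le_rfl) (Bnd.mono hlow (by omega))
        · refine Bnd.congr (g := fun q : ℤ => q ^ 8 +
            (5 * q ^ 6 - 11 * q ^ 5 + 9 * q ^ 4 - 4 * q ^ 3 + q ^ 2))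
            (fun q _ => by rw [hU3]; exact hpoly q) ?_
          exact Bnd.add (bnd_pow 8 8 le_rfl) (Bnd.mono hlow (by omega))
        · refine Bnd.congr (g := fun q : ℤ => 5 * q ^ 6 - 11 * q ^ 5 + 9 * q ^ 4 -
            4 * q ^ 3 + q ^ 2) (fun q _ => by rw [hU3]; have := hpoly q; push_cast; omega) ?_
          exact Bnd.mono hlow (by omega)
      | (a + 4), _ =>
        -- abbreviations for induction hypotheses
        have ih3 := ih (a + 3) (by omega) (by omega)
        have ih2 := ih (a + 2) (by omega) (by omega)
        have ihL3 : Bnd (fun q => L (a + 3) q) ((a + 3) ^ 2 - 1) := ih3.1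
        have ihU3 : Bnd (fun q => U (a + 3) q) ((a + 3) ^ 2 - 1) := ih3.2.1
        have ihU2 : Bnd (fun q => U (a + 2) q) ((a + 2) ^ 2 - 1) := ih2.2.1
        have hN0b3 : Bnd (fun q => N0 (a + 3) q) ((a + 3) ^ 2 - 2) :=
          N0bnd (a + 3) (by omega) (fun i h1 h2 => (ih i (by omega) h1).1)
        have hN0b2 : Bnd (fun q => N0 (a + 2) q) ((a + 2) ^ 2 - 2) :=
          N0bnd (a + 2) (by omega) (fun i h1 h2 => (ih i (by omega) h1).1)
        have e3 : (a + 3) ^ 2 = a ^ 2 + 6 * a + 9 := by ring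
        have e2 : (a + 2) ^ 2 = a ^ 2 + 4 * a + 4 := by ring
        have e4 : (a + 4) ^ 2 = a ^ 2 + 8 * a + 16 := by ring
        -- bound on N1 (a+3)
        have N1b : Bnd (fun q => N1 (a + 3) q) ((a + 3) ^ 2 - 1) := by
          refine Bnd.congr (g := fun q =>
            (q ^ ((a + 3) ^ 2 - 1) - (q - 3) ^ ((a + 3) ^ 2 - 1)) +
            N0 (a + 2) q * q ^ (2 * (a + 2) + 1) +
            q * U (a + 2) q * (q ^ (2 * (a + 1)) * ((q - 1) * q ^ 0 + q)))
            (fun q _ => ?_) ?_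
          · have h := hN1 (a + 4) (by omega) q
            simp only [show a + 4 - 1 = a + 3 from rfl, show a + 4 - 2 = a + 2 from rfl] at h
            rw [h]
            simp only [vAux, show a + 2 - 1 = a + 1 from rfl, show 1 - 1 = 0 from rfl,
              pow_zero, pow_one]
          · refine Bnd.add (Bnd.add ?_ ?_) ?_
            · exact Bnd.sub (bnd_pow _ _ le_rfl) (bnd_qsub3_pow _ _ le_rfl)
            · refine Bnd.mono (Bnd.mul hN0b2 (bnd_pow (2 * (a + 2) + 1) _ le_rfl)) (by omega)
            · refine Bnd.mono (Bnd.mul (Bnd.mul (bnd_id 1 le_rfl) ihU2)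
                (Bnd.mul (bnd_pow (2 * (a + 1)) _ le_rfl) bndlin)) (by omega)
        -- main decomposition of U (a+4) - q^((a+4)^2-1)
        have Umain : Bnd (fun q => U (a + 4) q - q ^ ((a + 4) ^ 2 - 1)) ((a + 4) ^ 2 - 2) := by
          refine Bnd.congr (g := fun q =>
            -(L (a + 3) q * q ^ (2 * (a + 3))) +
            (q * N0 (a + 3) q * q ^ (2 * (a + 3))) +
            (q * N1 (a + 3) q * (q ^ (2 * (a + 2)) * ((q - 1) * q ^ 0 + q))) +
            (q * U (a + 3) q * (q ^ (2 * (a + 1)) * ((q ^ 2 - 1) * q ^ 1 + q ^ 2))))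
            (fun q hq => ?_) ?_
          · have h := hU (a + 4) (by omega) q
            simp only [show a + 4 - 1 = a + 3 from rfl] at h
            have epow : (a + 4) ^ 2 - 1 = (a + 3) ^ 2 + 2 * (a + 3) := by omega
            rw [h, epow, pow_add]
            simp only [vAux, show a + 3 - 0 = a + 3 from rfl, show a + 3 - 1 = a + 2 from rfl,
              show a + 3 - 2 = a + 1 from rfl, show (0:ℕ) - 1 = 0 from rfl,
              show (1:ℕ) - 1 = 0 from rfl, show (2:ℕ) - 1 = 1 from rfl, pow_zero, pow_one]
            ring
          · refine Bnd.add (Bnd.add (Bnd.add ?_ ?_) ?_) ?_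
            · exact Bnd.mono (Bnd.neg (Bnd.mul ihL3 (bnd_pow (2 * (a + 3)) _ le_rfl))) (by omega)
            · exact Bnd.mono (Bnd.mul (Bnd.mul (bnd_id 1 le_rfl) hN0b3)
                (bnd_pow (2 * (a + 3)) _ le_rfl)) (by omega)
            · exact Bnd.mono (Bnd.mul (Bnd.mul (bnd_id 1 le_rfl) N1b)
                (Bnd.mul (bnd_pow (2 * (a + 2)) _ le_rfl) bndlin)) (by omega)
            · exact Bnd.mono (Bnd.mul (Bnd.mul (bnd_id 1 le_rfl) ihU3)
                (Bnd.mul (bnd_pow (2 * (a + 1)) _ le_rfl) bndcub)) (by omega)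
        have Ub : Bnd (fun q => U (a + 4) q) ((a + 4) ^ 2 - 1) := by
          refine Bnd.congr (g := fun q =>
            (U (a + 4) q - q ^ ((a + 4) ^ 2 - 1)) + q ^ ((a + 4) ^ 2 - 1))
            (fun q _ => by ring) ?_
          exact Bnd.add (Bnd.mono Umain (by omega)) (bnd_pow _ _ le_rfl)
        have Lb : Bnd (fun q => L (a + 4) q) ((a + 4) ^ 2 - 1) := by
          refine Bnd.congr (g := fun q =>
            (q ^ ((a + 3) ^ 2) - U (a + 3) q) * q ^ (2 * (a + 3)))
            (fun q _ => hL (a + 4) (by omega) q) ?_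
          exact Bnd.mono (Bnd.mul (Bnd.sub (bnd_pow _ _ le_rfl) (Bnd.mono ihU3 (by omega)))
            (bnd_pow (2 * (a + 3)) _ le_rfl)) (by omega)
        exact ⟨Lb, Ub, fun _ => Umain⟩
  -- conclude
  obtain ⟨b, rfl⟩ : ∃ b, n = b + 4 := ⟨n - 4, by omega⟩
  have hub := (key (b + 3) (by omega)).2.2 (by omega)
  obtain ⟨C, hC0, hC⟩ := hub.exists_nonneg
  refine ⟨C, fun q hq => ?_⟩
  have hq0 : (0 : ℤ) < q := by linarith
  have e1 : (b + 4) ^ 2 - 1 = (b + 3) ^ 2 + 2 * (b + 3) := by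
    have : (b + 4) ^ 2 = b ^ 2 + 8 * b + 16 := by ring
    have : (b + 3) ^ 2 = b ^ 2 + 6 * b + 9 := by ring
    omega
  have e2 : (b + 4) ^ 2 - 2 = ((b + 3) ^ 2 - 1) + 2 * (b + 3) := by
    have : (b + 4) ^ 2 = b ^ 2 + 8 * b + 16 := by ring
    have : (b + 3) ^ 2 = b ^ 2 + 6 * b + 9 := by ring
    omega
  have e3 : (b + 4) ^ 2 - 3 = ((b + 3) ^ 2 - 2) + 2 * (b + 3) := by
    have : (b + 4) ^ 2 = b ^ 2 + 8 * b + 16 := by ring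
    have : (b + 3) ^ 2 = b ^ 2 + 6 * b + 9 := by ring
    omega
  have hq2 : ((b + 3) ^ 2 : ℕ) = ((b + 3) ^ 2 - 1) + 1 := by
    have : (b + 3) ^ 2 = b ^ 2 + 6 * b + 9 := by ring
    omega
  have hdecomp : L (b + 4) q - (q ^ ((b + 4) ^ 2 - 1) - q ^ ((b + 4) ^ 2 - 2)) =
      (q ^ ((b + 3) ^ 2 - 1) - U (b + 3) q) * q ^ (2 * (b + 3)) := by
    rw [hL (b + 4) (by omega) q]
    show (q ^ ((b + 3) ^ 2) - U (b + 3) q) * q ^ (2 * (b + 3)) - _ = _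
    rw [e1, e2, pow_add, pow_add, hq2, pow_add]
    ring
  rw [hdecomp, abs_mul, abs_pow, abs_of_pos hq0, abs_sub_comm]
  calc |U (b + 3) q - q ^ ((b + 3) ^ 2 - 1)| * q ^ (2 * (b + 3))
      ≤ (C * q ^ ((b + 3) ^ 2 - 2)) * q ^ (2 * (b + 3)) :=
        mul_le_mul_of_nonneg_right (hC q hq) (pow_nonneg hq0.le _)
    _ = C * q ^ ((b + 4) ^ 2 - 3) := by rw [e3, pow_add]; ring
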